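/- Let K be a field and let H be the free K-vector space with basis the set of all forests of planar rooted trees, endowed with the bilinear concatenation operation * and the bilinear grafting operation ≻. Then (H, *, ≻) is a Hoch-algebra: * is associative, and for all x, y, z ∈ H one has (x ≻ y) * z + (x * y) ≻ z = x ≻ (y * z) + x * (y ≻ z). -/

import Mathlib

open scoped TensorProduct

/-- Planar rooted trees: a tree is either the leaf `|`, or a grafting of at
least two planar rooted trees (`graft t₁ t₂ rest` represents `[t₁, t₂, rest…]`). -/
inductive PTree : Type
  | leaf : PTree
  | graft (t₁ t₂ : PTree) (rest : List PTree) : PTree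

/-- A forest is a nonempty word of planar rooted trees. -/
abbrev Forest : Type := {l : List PTree // l ≠ []}

/-- Grafting of a list of trees (only meaningful on lists of length ≥ 2;
on shorter lists we return a junk value, which is never used). -/
def graftList : List PTree → PTree
  | [] => .leaf
  | [a] => a
  | a :: b :: rest => .graft a b rest

mutual
/-- Number of leaves of a planar rooted tree. -/
def leavesT : PTree → ℕ
  | .leaf => 1
  | .graft a b rest => leavesT a + leavesT b + leavesL rest

/-- Sum of the numbers of leaves of a list of trees. -/
def leavesL : List PTree → ℕ
  | [] => 0
  | t :: ts => leavesT t + leavesL ts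
end

/-- Number of leaves of a forest. -/
def leavesF (w : Forest) : ℕ := leavesL w.1

variable (K : Type*) [Field K]

/-- `H K` is the free `K`-vector space with basis the set of forests of
planar rooted trees. -/
abbrev H : Type _ := Forest →₀ K

/-- The leaf, as a (one-tree) forest. -/
def leafF : Forest := ⟨[PTree.leaf], by simp⟩

/-- The concatenation product `*`, as a bilinear map on `H K`;
on basis forests it is concatenation of words. -/
noncomputable def mulH : H K →ₗ[K] H K →ₗ[K] H K :=
  Finsupp.lift (H K →ₗ[K] H K) K Forest fun x =>
    Finsupp.lift (H K) K Forest fun y =>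
      Finsupp.single ⟨x.1 ++ y.1, by simp [x.2]⟩ 1

/-- The grafting operation `≻` on two basis forests:
`(t₁…tₚ) ≻ (s₁…s_q) = Σ_{k=1}^{q} Σ_{i=0}^{p−1}
t₁…t_{p−(i+1)} [t_{p−i},…,tₚ, s₁,…,s_k] s_{k+1}…s_q`. -/
noncomputable def succForest (x y : Forest) : H K :=
  ∑ k ∈ Finset.range y.1.length, ∑ i ∈ Finset.range x.1.length,
    Finsupp.single
      ⟨x.1.take (x.1.length - (i + 1)) ++
        (graftList (x.1.drop (x.1.length - (i + 1)) ++ y.1.take (k + 1)) :: y.1.drop (k + 1)),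
        by simp⟩ 1

/-- The operation `≻`, as a bilinear map on `H K`. -/
noncomputable def succH : H K →ₗ[K] H K →ₗ[K] H K :=
  Finsupp.lift (H K →ₗ[K] H K) K Forest fun x =>
    Finsupp.lift (H K) K Forest fun y => succForest K x y

/-! ### Auxiliary lemmas -/

/-- The generic basis term appearing in the grafting operation. -/
noncomputable def Sgl (a b : List PTree) (k i : ℕ) : H K :=
  Finsupp.single
    ⟨a.take (a.length - (i + 1)) ++
      (graftList (a.drop (a.length - (i + 1)) ++ b.take (k + 1)) :: b.drop (k + 1)),
      by simp⟩ 1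

lemma succForest_eq (x y : Forest) :
    succForest K x y =
      ∑ k ∈ Finset.range y.1.length, ∑ i ∈ Finset.range x.1.length, Sgl K x.1 y.1 k i := rfl

lemma mulH_single (x y : Forest) (c d : K) :
    mulH K (Finsupp.single x c) (Finsupp.single y d) =
      Finsupp.single ⟨x.1 ++ y.1, by simp [x.2]⟩ (c * d) := by
  simp [mulH, Finsupp.lift_apply, Finsupp.sum_single_index, Finsupp.smul_single, mul_comm]

lemma succH_single (x y : Forest) (c d : K) :
    succH K (Finsupp.single x c) (Finsupp.single y d) = (c * d) • succForest K x y := by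
  simp [succH, Finsupp.lift_apply, Finsupp.sum_single_index, smul_smul, mul_comm]

lemma Sgl_list_eq (a b : List PTree) (k i : ℕ) (l : List PTree)
    (h : a.take (a.length - (i + 1)) ++
      (graftList (a.drop (a.length - (i + 1)) ++ b.take (k + 1)) :: b.drop (k + 1)) = l)
    (hl : l ≠ []) : Sgl K a b k i = Finsupp.single ⟨l, hl⟩ 1 := by
  unfold Sgl
  congr 1
  exact Subtype.ext h

lemma Sgl_mul_right (a b : List PTree) (c : Forest) (k i : ℕ) (hk : k + 1 ≤ b.length) :
    mulH K (Sgl K a b k i) (Finsupp.single c 1) = Sgl K a (b ++ c.1) k i := by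
  have h : (a.take (a.length - (i + 1)) ++
        (graftList (a.drop (a.length - (i + 1)) ++ b.take (k + 1)) :: b.drop (k + 1))) ++ c.1
      = a.take (a.length - (i + 1)) ++
        (graftList (a.drop (a.length - (i + 1)) ++ (b ++ c.1).take (k + 1)) ::
          (b ++ c.1).drop (k + 1)) := by
    rw [List.take_append_of_le_length hk, List.drop_append_of_le_length hk]
    simp [List.append_assoc]
  unfold Sgl
  rw [mulH_single, mul_one]
  congr 1
  exact Subtype.ext h

lemma Sgl_append_right (a b c : List PTree) (k i : ℕ) :
    Sgl K a (b ++ c) (b.length + k) i =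
      Finsupp.single
        ⟨a.take (a.length - (i + 1)) ++
          (graftList ((a.drop (a.length - (i + 1)) ++ b) ++ c.take (k + 1)) :: c.drop (k + 1)),
          by simp⟩ 1 := by
  apply Sgl_list_eq
  have h1 : b.length + k + 1 = b.length + (k + 1) := by omega
  rw [h1, List.take_length_add_append, List.drop_length_add_append]
  simp [List.append_assoc]

lemma Sgl_left_split (a : List PTree) (ha : a ≠ []) (b c : List PTree) (k i : ℕ)
    (hi : i < b.length) :
    Sgl K (a ++ b) c k i = mulH K (Finsupp.single ⟨a, ha⟩ 1) (Sgl K b c k i) := by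
  have h1 : (a ++ b).length - (i + 1) = a.length + (b.length - (i + 1)) := by
    simp only [List.length_append]; omega
  have h : (a ++ b).take ((a ++ b).length - (i + 1)) ++
        (graftList ((a ++ b).drop ((a ++ b).length - (i + 1)) ++ c.take (k + 1)) ::
          c.drop (k + 1))
      = a ++ (b.take (b.length - (i + 1)) ++
        (graftList (b.drop (b.length - (i + 1)) ++ c.take (k + 1)) :: c.drop (k + 1))) := by
    rw [h1, List.take_length_add_append, List.drop_length_add_append, List.append_assoc]
  unfold Sgl
  rw [mulH_single, mul_one]
  congr 1
  exact Subtype.ext h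

lemma Sgl_left_shift (a b c : List PTree) (k i : ℕ) (hi : i < a.length) :
    Sgl K (a ++ b) c k (b.length + i) = Sgl K a (b ++ c) (b.length + k) i := by
  rw [Sgl_append_right]
  apply Sgl_list_eq
  have h1 : (a ++ b).length - (b.length + i + 1) = a.length - (i + 1) := by
    simp only [List.length_append]; omega
  have h2 : a.length - (i + 1) ≤ a.length := by omega
  rw [h1, List.take_append_of_le_length h2, List.drop_append_of_le_length h2]

/-- The core computation: the Hochschild two-cocycle relation on basis forests. -/
lemma key_cocycle (x y z : Forest) :
    mulH K (succForest K x y) (Finsupp.single z 1)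
      + succForest K ⟨x.1 ++ y.1, by simp [x.2]⟩ z
    = succForest K x ⟨y.1 ++ z.1, by simp [y.2]⟩
      + mulH K (Finsupp.single x 1) (succForest K y z) := by
  obtain ⟨a, ha⟩ := x
  obtain ⟨b, hb⟩ := y
  obtain ⟨c, hc⟩ := z
  simp only [succForest_eq]
  -- push mulH inside the sums
  rw [map_sum]
  simp only [map_sum, LinearMap.coe_sum, Finset.sum_apply]
  -- Term A: rewrite using Sgl_mul_right
  have hA : ∀ k ∈ Finset.range b.length,
      (∑ i ∈ Finset.range a.length, mulH K (Sgl K a b k i) (Finsupp.single ⟨c, hc⟩ 1))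
      = ∑ i ∈ Finset.range a.length, Sgl K a (b ++ c) k i := by
    intro k hk
    refine Finset.sum_congr rfl fun i _ => ?_
    exact Sgl_mul_right K a b ⟨c, hc⟩ k i (Finset.mem_range.mp hk)
  rw [Finset.sum_congr rfl hA]
  -- split term B (over i) and term C (over k)
  have hlen : (a ++ b).length = b.length + a.length := by
    simp [List.length_append]; omega
  have hBlen : (∀ k, ∑ i ∈ Finset.range (a ++ b).length, Sgl K (a ++ b) c k i
      = ∑ i ∈ Finset.range b.length, Sgl K (a ++ b) c k i
        + ∑ i ∈ Finset.range a.length, Sgl K (a ++ b) c k (b.length + i)) := by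
    intro k
    rw [hlen, Finset.sum_range_add]
  simp only [hBlen]
  have hClen : (b ++ c).length = b.length + c.length := List.length_append (as := b) (bs := c)
  rw [hClen, Finset.sum_range_add, Finset.sum_add_distrib]
  -- match B₂ with C₂
  have hB2 : ∀ k ∈ Finset.range c.length,
      (∑ i ∈ Finset.range a.length, Sgl K (a ++ b) c k (b.length + i))
      = ∑ i ∈ Finset.range a.length, Sgl K a (b ++ c) (b.length + k) i := by
    intro k _
    refine Finset.sum_congr rfl fun i hi => ?_
    exact Sgl_left_shift K a b c k i (Finset.mem_range.mp hi)
  -- match B₁ with D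
  have hB1 : ∀ k ∈ Finset.range c.length,
      (∑ i ∈ Finset.range b.length, Sgl K (a ++ b) c k i)
      = ∑ i ∈ Finset.range b.length, mulH K (Finsupp.single ⟨a, ha⟩ 1) (Sgl K b c k i) := by
    intro k _
    refine Finset.sum_congr rfl fun i hi => ?_
    exact Sgl_left_split K a ha b c k i (Finset.mem_range.mp hi)
  rw [Finset.sum_congr rfl hB2, Finset.sum_congr rfl hB1]
  abel

lemma mulH_assoc_single (x y z : Forest) (c d e : K) :
    mulH K (mulH K (Finsupp.single x c) (Finsupp.single y d)) (Finsupp.single z e)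
      = mulH K (Finsupp.single x c) (mulH K (Finsupp.single y d) (Finsupp.single z e)) := by
  rw [mulH_single, mulH_single, mulH_single, mulH_single]
  congr 1
  · exact Subtype.ext (List.append_assoc x.1 y.1 z.1)
  · ring

/-- `(H, *, ≻)` is a Hoch-algebra: the concatenation product is
associative and together with the grafting operation `≻` it satisfies the
Hochschild two-cocycle relation. -/
theorem stmt0 (K : Type*) [Field K] :
    (∀ x y z : H K, mulH K (mulH K x y) z = mulH K x (mulH K y z)) ∧
    (∀ x y z : H K,
      mulH K (succH K x y) z + succH K (mulH K x y) z
        = succH K x (mulH K y z) + mulH K x (succH K y z)) := by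
  have hsm : ∀ (w : Forest) (c : K), Finsupp.single w c = c • Finsupp.single w (1 : K) := by
    intro w c; rw [Finsupp.smul_single, smul_eq_mul, mul_one]
  constructor
  · intro x y z
    induction x using Finsupp.induction_linear with
    | zero => simp
    | add f g hf hg => simp only [map_add, LinearMap.add_apply, hf, hg]
    | single a ca =>
      induction y using Finsupp.induction_linear with
      | zero => simp
      | add f g hf hg => simp only [map_add, LinearMap.add_apply, hf, hg]
      | single b cb =>
        induction z using Finsupp.induction_linear with
        | zero => simp
        | add f g hf hg => simp only [map_add, hf, hg]
        | single cc c => exact mulH_assoc_single K a b cc ca cb c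
  · intro x y z
    induction x using Finsupp.induction_linear with
    | zero => simp
    | add f g hf hg =>
      simp only [map_add, LinearMap.add_apply]
      rw [add_add_add_comm, hf, hg, add_add_add_comm]
    | single a ca =>
      induction y using Finsupp.induction_linear with
      | zero => simp
      | add f g hf hg =>
        simp only [map_add, LinearMap.add_apply]
        rw [add_add_add_comm, hf, hg, add_add_add_comm]
      | single b cb =>
        induction z using Finsupp.induction_linear with
        | zero => simp
        | add f g hf hg =>
          simp only [map_add]
          rw [add_add_add_comm, hf, hg, add_add_add_comm]
        | single c cc =>
          have hkey := key_cocycle K a b c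
          rw [hsm a ca, hsm b cb, hsm c cc]
          simp only [map_smul, LinearMap.smul_apply]
          simp only [mulH_single, succH_single, mul_one, one_mul, one_smul]
          simp only [← smul_add]
          rw [hkey]
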